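/- Let k be an algebraically closed field of characteristic p > 2, let s = sl_2(k), and let d be an element of k. Define the baby Verma module Z(d) to be the p-dimensional k-vector space with basis v_0, ..., v_{p-1} and s-action h·v_i = (d - 2i) v_i, e·v_0 = 0, e·v_i = i(d - i + 1) v_{i-1} for i > 0, f·v_i = v_{i+1} for i < p-1, and f·v_{p-1} = 0. If d does not lie in the prime subfield F_p ∖ {p-1} (i.e., d is not in {0, 1, ..., p-2} viewed in k), then Z(d) is a simple s-module. -/

import Mathlib

/-- Let `k` be an algebraically closed field of characteristic `p > 2`,
`s = sl₂(k)`, and `d ∈ k`.  The baby Verma module `Z(d)` is the `p`-dimensional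
`s`-module with basis `v_0, ..., v_{p-1}` and action
`h·v_i = (d - 2i) v_i`, `e·v_i = i(d - i + 1) v_{i-1}` (so `e·v_0 = 0`),
`f·v_i = v_{i+1}` for `i < p-1` and `f·v_{p-1} = 0`.
If `d ∉ {0, 1, ..., p-2}` viewed in `k`, then `Z(d)` is a simple `s`-module.

A representation of `sl₂(k)` is formalized as a triple of endomorphisms `E, H, F`
satisfying the commutator relations; a submodule is a subspace stable under all three. -/
theorem babyVerma_simple_of_not_restrictedWeight
    (k : Type*) [Field k] [IsAlgClosed k] (p : ℕ) (hp : p.Prime) (hp2 : 2 < p)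
    [CharP k p] (d : k) (hd : ∀ j : ℕ, j ≤ p - 2 → d ≠ (j : k))
    (M : Type*) [AddCommGroup M] [Module k M]
    (E H F : Module.End k M)
    (hHE : ⁅H, E⁆ = (2 : k) • E) (hHF : ⁅H, F⁆ = (-2 : k) • F) (hEF : ⁅E, F⁆ = H)
    (v : Module.Basis (Fin p) k M)
    (hH : ∀ i : Fin p, H (v i) = (d - 2 * ((i : ℕ) : k)) • v i)
    (hE : ∀ i : Fin p,
      E (v i) = (((i : ℕ) : k) * (d - ((i : ℕ) : k) + 1)) •
        v ⟨(i : ℕ) - 1, Nat.lt_of_le_of_lt (Nat.sub_le _ _) i.isLt⟩)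
    (hF : ∀ i : Fin p,
      F (v i) = if h : (i : ℕ) + 1 < p then v ⟨(i : ℕ) + 1, h⟩ else 0) :
    ∀ N : Submodule k M,
      (∀ x ∈ N, E x ∈ N) → (∀ x ∈ N, H x ∈ N) → (∀ x ∈ N, F x ∈ N) →
      N = ⊥ ∨ N = ⊤ := by
  intro N hNE hNH hNF
  rcases eq_or_ne N ⊥ with h | hne
  · exact Or.inl h
  right
  have hp0 : 0 < p := hp.pos
  have two_ne : (2 : k) ≠ 0 := by
    have : ((2:ℕ):k) ≠ 0 := by
      rw [Ne, CharP.cast_eq_zero_iff k p]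
      intro hdvd
      have := Nat.le_of_dvd (by norm_num) hdvd
      omega
    simpa using this
  have cast_inj : ∀ i j : Fin p, ((i:ℕ):k) = ((j:ℕ):k) → i = j := by
    intro i j hij
    exact Fin.ext (CharP.natCast_injOn_Iio k p i.isLt j.isLt hij)
  -- repr of H x
  have hrep : ∀ (x : M) (m : Fin p),
      v.repr (H x) m = (d - 2*((m:ℕ):k)) * v.repr x m := by
    intro x m
    conv_lhs => rw [← v.sum_repr x]
    rw [map_sum]
    simp only [map_smul, hH]
    rw [map_sum, Finsupp.finset_sum_apply]
    rw [Fintype.sum_eq_single m]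
    · simp [mul_comm]
    · intro j hj
      simp [Finsupp.single_apply, hj]
  -- extraction of a basis vector
  have key : ∀ n (x : M), x ∈ N → x ≠ 0 → (v.repr x).support.card ≤ n →
      ∃ i, v i ∈ N := by
    intro n
    induction n with
    | zero =>
      intro x hxN hx0 hcard
      exfalso
      apply hx0
      have : v.repr x = 0 := by
        rw [← Finsupp.support_eq_empty, ← Finset.card_eq_zero]; omega
      simpa using congrArg v.repr.symm this
    | succ n ih =>
      intro x hxN hx0 hcard
      have hsupp : (v.repr x).support.Nonempty := by
        rw [Finsupp.support_nonempty_iff]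
        simpa using hx0
      obtain ⟨i, hi⟩ := hsupp
      by_cases hone : (v.repr x).support = {i}
      · -- x = c • v i
        have hxi : v.repr x i ≠ 0 := Finsupp.mem_support_iff.mp hi
        refine ⟨i, ?_⟩
        obtain ⟨c, hc⟩ : ∃ c : k, v.repr x i = c := ⟨_, rfl⟩
        have hcne : c ≠ 0 := hc ▸ hxi
        have hx : x = c • v i := by
          rw [← hc]
          conv_lhs => rw [← v.sum_repr x]
          rw [Fintype.sum_eq_single i]
          intro j hj
          have : v.repr x j = 0 := by
            by_contra hc
            have := Finsupp.mem_support_iff.mpr hc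
            rw [hone, Finset.mem_singleton] at this
            exact hj this
          simp [this]
        have hmem : c⁻¹ • x ∈ N := N.smul_mem _ hxN
        rwa [hx, smul_smul, inv_mul_cancel₀ hcne, one_smul] at hmem
      · -- reduce support
        obtain ⟨j, hj, hji⟩ : ∃ j ∈ (v.repr x).support, j ≠ i := by
          by_contra hc
          push_neg at hc
          apply hone
          apply Finset.eq_singleton_iff_unique_mem.mpr ⟨hi, hc⟩
        set y := H x - (d - 2*((i:ℕ):k)) • x with hy
        have hyN : y ∈ N := N.sub_mem (hNH x hxN) (N.smul_mem _ hxN)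
        have hyrep : ∀ m, v.repr y m = (2*((i:ℕ):k) - 2*((m:ℕ):k)) * v.repr x m := by
          intro m
          rw [hy]
          simp only [map_sub, map_smul, Finsupp.sub_apply, Finsupp.smul_apply, hrep,
            smul_eq_mul]
          ring
        have hyj : v.repr y j ≠ 0 := by
          rw [hyrep]
          apply mul_ne_zero
          · intro hc
            apply hji
            apply cast_inj
            have h2 : (2:k) * ((j:ℕ):k) = 2 * ((i:ℕ):k) := by linear_combination -hc
            exact mul_left_cancel₀ two_ne h2
          · exact Finsupp.mem_support_iff.mp hj
        have hy0 : y ≠ 0 := by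
          intro hc; apply hyj; rw [hc]; simp
        have hsub : (v.repr y).support ⊆ (v.repr x).support \ {i} := by
          intro m hm
          rw [Finset.mem_sdiff, Finset.mem_singleton]
          have hm' := Finsupp.mem_support_iff.mp hm
          rw [hyrep] at hm'
          constructor
          · exact Finsupp.mem_support_iff.mpr fun hc => hm' (by rw [hc, mul_zero])
          · rintro rfl
            exact hm' (by ring)
        have hcard' : (v.repr y).support.card ≤ n := by
          have h1 := Finset.card_le_card hsub
          have h2 : ((v.repr x).support \ {i}).card = (v.repr x).support.card - 1 := by
            rw [Finset.card_sdiff_of_subset (by simpa using hi)]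
            simp
          have hpos : 0 < (v.repr x).support.card := Finset.card_pos.mpr ⟨i, hi⟩
          omega
        exact ih y hyN hy0 hcard'
  -- get a basis vector in N
  obtain ⟨x, hxN, hx0⟩ : ∃ x ∈ N, x ≠ 0 := by
    by_contra hc
    push_neg at hc
    exact hne (by
      rw [eq_bot_iff]
      intro z hz
      exact (Submodule.mem_bot k).mpr (hc z hz))
  obtain ⟨i₀, hi₀⟩ := key _ x hxN hx0 le_rfl
  -- climb up with F
  have up : ∀ t : ℕ, ∀ h : (i₀ : ℕ) + t < p, v ⟨(i₀:ℕ) + t, h⟩ ∈ N := by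
    intro t
    induction t with
    | zero => intro h; simpa using hi₀
    | succ t ih =>
      intro h
      have ht : (i₀:ℕ) + t < p := by omega
      have hmem := hNF _ (ih ht)
      rw [hF ⟨(i₀:ℕ) + t, ht⟩] at hmem
      simp only at hmem
      rw [dif_pos (by omega : (i₀:ℕ) + t + 1 < p)] at hmem
      have hidx : (⟨(i₀:ℕ) + (t+1), h⟩ : Fin p) = ⟨(i₀:ℕ) + t + 1, by omega⟩ := by
        apply Fin.ext
        show (i₀:ℕ) + (t+1) = (i₀:ℕ) + t + 1
        omega
      rw [hidx]
      exact hmem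
  have hlast : v ⟨p - 1, by omega⟩ ∈ N := by
    have h := up (p - 1 - (i₀:ℕ)) (by have := i₀.isLt; omega)
    have hidx : (⟨p - 1, by omega⟩ : Fin p) = ⟨(i₀:ℕ) + (p - 1 - (i₀:ℕ)), by have := i₀.isLt; omega⟩ := by
      apply Fin.ext
      show p - 1 = (i₀:ℕ) + (p - 1 - (i₀:ℕ))
      have := i₀.isLt
      omega
    rw [hidx]
    exact h
  -- climb down with E
  have down : ∀ t : ℕ, t ≤ p - 1 → v ⟨p - 1 - t, by omega⟩ ∈ N := by
    intro t
    induction t with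
    | zero => intro _; exact hlast
    | succ t ih =>
      intro h
      have ht : t ≤ p - 1 := by omega
      have hmem := hNE _ (ih ht)
      set i : Fin p := ⟨p - 1 - t, by omega⟩ with hidef
      have hival : (i:ℕ) = p - 1 - t := rfl
      have hi1 : 1 ≤ (i:ℕ) := by rw [hival]; omega
      rw [hE i] at hmem
      have hc : ((i:ℕ):k) * (d - ((i:ℕ):k) + 1) ≠ 0 := by
        apply mul_ne_zero
        · rw [Ne, CharP.cast_eq_zero_iff k p]
          intro hdvd
          have h2 := Nat.le_of_dvd (by omega) hdvd
          have := i.isLt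
          omega
        · intro hc
          have hcast : ((((i:ℕ)-1 : ℕ)):k) = ((i:ℕ):k) - 1 := by
            have := Nat.cast_sub (R := k) hi1
            simpa using this
          have hdi : d = ((((i:ℕ)-1 : ℕ)):k) := by
            rw [hcast]
            linear_combination hc
          exact hd ((i:ℕ)-1) (by have := i.isLt; omega) hdi
      have : ((((i:ℕ):k) * (d - ((i:ℕ):k) + 1))⁻¹) •
          (((i:ℕ):k) * (d - ((i:ℕ):k) + 1)) •
          v ⟨(i:ℕ) - 1, Nat.lt_of_le_of_lt (Nat.sub_le _ _) i.isLt⟩ ∈ N :=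
        N.smul_mem _ hmem
      rw [smul_smul, inv_mul_cancel₀ hc, one_smul] at this
      have hidx : (⟨p - 1 - (t+1), by omega⟩ : Fin p) =
          ⟨(i:ℕ) - 1, Nat.lt_of_le_of_lt (Nat.sub_le _ _) i.isLt⟩ := by
        apply Fin.ext
        show p - 1 - (t+1) = (i:ℕ) - 1
        rw [hival]
        omega
      rw [hidx]
      exact this
  -- all basis vectors in N
  have hall : ∀ m : Fin p, v m ∈ N := by
    intro m
    have hmd := down (p - 1 - (m:ℕ)) (by omega)
    have hidx : m = (⟨p - 1 - (p - 1 - (m:ℕ)), by omega⟩ : Fin p) := by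
      apply Fin.ext
      show (m:ℕ) = p - 1 - (p - 1 - (m:ℕ))
      have := m.isLt
      omega
    rw [hidx]
    exact hmd
  rw [eq_top_iff, ← v.span_eq, Submodule.span_le]
  rintro _ ⟨m, rfl⟩
  exact hall m
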